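/- Let (Op, w) be a set of weighted operations with each left side of length at most 1, and let b', b'' be natural numbers with b' + b'' = b - 1. If α is an alignment with l(α) = P₁ ∘ P₂ and weight w(α) ≤ b, then there is a splitting α = α₁ ∘ α₂ with l(α₁) = P₁, l(α₂) = P₂, and moreover w(α₁) ≤ b' or w(α₂) ≤ b''. -/
import Mathlib

lemma align_split {α : Type*}
    (al : List (List α × List α)) (hlen : ∀ op ∈ al, op.1.length ≤ 1) :
    ∀ P₁ P₂ : List α, (al.map Prod.fst).flatten = P₁ ++ P₂ →
    ∃ al₁ al₂ : List (List α × List α), al = al₁ ++ al₂ ∧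
      (al₁.map Prod.fst).flatten = P₁ ∧ (al₂.map Prod.fst).flatten = P₂ := by
  induction al with
  | nil =>
    intro P₁ P₂ h
    simp at h
    exact ⟨[], [], by simp, by simp [h.1.symm], by simp [h.2.symm]⟩
  | cons op rest ih =>
    intro P₁ P₂ h
    cases P₁ with
    | nil => exact ⟨[], op :: rest, by simp, by simp, by simpa using h⟩
    | cons x P₁' =>
      have hop := hlen op (by simp)
      match hop1 : op.1 with
      | [] =>
        simp [hop1] at h
        obtain ⟨al₁, al₂, h1, h2, h3⟩ := ih (fun o ho => hlen o (by simp [ho])) (x :: P₁') P₂ h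
        exact ⟨op :: al₁, al₂, by simp [h1], by simp [hop1, h2], h3⟩
      | [a] =>
        simp [hop1] at h
        obtain ⟨hax, h'⟩ := h
        obtain ⟨al₁, al₂, h1, h2, h3⟩ := ih (fun o ho => hlen o (by simp [ho])) P₁' P₂ h'
        exact ⟨op :: al₁, al₂, by simp [h1], by simp [hop1, hax, h2], h3⟩
      | a :: b :: t => simp [hop1] at hop

/-- splitting an alignment with a weight bound `b`, where `b' + b'' = b - 1`:
one of the parts has weight `≤ b'` or the other `≤ b''`. -/
theorem alignment_split_weight {α : Type*} (Op : Set (List α × List α))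
    (w : List α × List α → ℕ)
    (hOp : ∀ op ∈ Op, op.1.length ≤ 1)
    (b b' b'' : ℕ) (hb : b' + b'' = b - 1)
    (al : List (List α × List α)) (hal : ∀ op ∈ al, op ∈ Op)
    (P₁ P₂ : List α) (h : (al.map Prod.fst).flatten = P₁ ++ P₂)
    (hw : (al.map w).sum ≤ b) :
    ∃ al₁ al₂ : List (List α × List α), al = al₁ ++ al₂ ∧
      (al₁.map Prod.fst).flatten = P₁ ∧ (al₂.map Prod.fst).flatten = P₂ ∧
      ((al₁.map w).sum ≤ b' ∨ (al₂.map w).sum ≤ b'') := by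
  obtain ⟨al₁, al₂, h1, h2, h3⟩ :=
    align_split al (fun op ho => hOp op (hal op ho)) P₁ P₂ h
  refine ⟨al₁, al₂, h1, h2, h3, ?_⟩
  have : (al₁.map w).sum + (al₂.map w).sum ≤ b := by
    rw [h1] at hw; simpa using hw
  omega
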